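/- arXiv:2010.00429 — 2 statements merged into one kernel-verified Lean document; each statement's English description precedes it below -/
import Mathlib

section
/- Let H be a subcubic finite simple graph containing four distinct vertices a, b, c, d such that ab, bc, cd, da, ac are edges of H and bd is not an edge of H (i.e., a copy of K₄ minus an edge, with a and c the vertices of degree 3 in the copy). If H − {a,c} admits an injective edge-coloring with 7 colors, then H admits an injective edge-coloring with 7 colors. -/
open SimpleGraph

/-- Two distinct edges of `G` *conflict* if they are at distance exactly 1 in `G`
(they share no endpoint but some endpoint of one is adjacent to some endpoint of the
other), or they lie in a common triangle of `G`. -/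
def EdgeConflict {V : Type*} (G : SimpleGraph V) (e₁ e₂ : Sym2 V) : Prop :=
  e₁ ≠ e₂ ∧
    (((∀ u ∈ e₁, u ∉ e₂) ∧ ∃ u ∈ e₁, ∃ v ∈ e₂, G.Adj u v) ∨
      (∃ a b c : V, G.Adj a b ∧ G.Adj b c ∧ G.Adj a c ∧
        e₁ ∈ ({s(a, b), s(b, c), s(a, c)} : Set (Sym2 V)) ∧
        e₂ ∈ ({s(a, b), s(b, c), s(a, c)} : Set (Sym2 V))))

/-- An injective edge-coloring of `G` with `k` colors. -/
def IsInjEdgeColoring {V : Type*} (G : SimpleGraph V) {k : ℕ} (f : Sym2 V → Fin k) : Prop :=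
  ∀ e₁ ∈ G.edgeSet, ∀ e₂ ∈ G.edgeSet, EdgeConflict G e₁ e₂ → f e₁ ≠ f e₂

/-- The injective chromatic index of `G`. -/
noncomputable def injChromIndex {V : Type*} (G : SimpleGraph V) : ℕ :=
  sInf {k : ℕ | ∃ f : Sym2 V → Fin k, IsInjEdgeColoring G f}


lemma EdgeConflict.symm' {V : Type*} {G : SimpleGraph V} {e₁ e₂ : Sym2 V}
    (h : EdgeConflict G e₁ e₂) : EdgeConflict G e₂ e₁ := by
  obtain ⟨hne, ⟨hd, u, hu, v, hv, ha⟩ | ⟨p, q, t, h1, h2, h3, m1, m2⟩⟩ := h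
  · exact ⟨hne.symm, Or.inl ⟨fun x hx hx' => hd x hx' hx, v, hv, u, hu, ha.symm⟩⟩
  · exact ⟨hne.symm, Or.inr ⟨p, q, t, h1, h2, h3, m2, m1⟩⟩

lemma not_conflict_shared {V : Type*} {G : SimpleGraph V} {x y z : V}
    (hyz : y ≠ z) (hadj : ¬ G.Adj y z) : ¬ EdgeConflict G s(x,y) s(x,z) := by
  rintro ⟨hne, ⟨hd, -⟩ | ⟨p, q, t, h1, h2, h3, m1, m2⟩⟩
  · exact hd x (by simp) (by simp)
  · simp only [Set.mem_insert_iff, Set.mem_singleton_iff] at m1 m2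
    have hy : y = p ∨ y = q ∨ y = t := by
      have hmem : y ∈ s(x,y) := by simp
      rcases m1 with h | h | h <;> rw [h] at hmem <;> rw [Sym2.mem_iff] at hmem <;> tauto
    have hz : z = p ∨ z = q ∨ z = t := by
      have hmem : z ∈ s(x,z) := by simp
      rcases m2 with h | h | h <;> rw [h] at hmem <;> rw [Sym2.mem_iff] at hmem <;> tauto
    rcases hy with rfl | rfl | rfl <;> rcases hz with rfl | rfl | rfl <;>
      first
        | exact hyz rfl
        | exact hadj h1 | exact hadj h2 | exact hadj h3
        | exact hadj h1.symm | exact hadj h2.symm | exact hadj h3.symm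

lemma triangle_aux {V : Type*} {G : SimpleGraph V} {x y : V} {e₂ : Sym2 V}
    {p q t : V} (h1 : G.Adj p q) (h2 : G.Adj q t) (h3 : G.Adj p t)
    (hx : s(x,y) ∈ ({s(p,q), s(q,t), s(p,t)} : Set (Sym2 V)))
    (he : e₂ ∈ ({s(p,q), s(q,t), s(p,t)} : Set (Sym2 V))) :
    ∃ w, G.Adj x w ∧ G.Adj y w ∧ e₂ ∈ ({s(x,y), s(x,w), s(y,w)} : Set (Sym2 V)) := by
  simp only [Set.mem_insert_iff, Set.mem_singleton_iff] at hx he ⊢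
  have hs : ∀ u v : V, s(u,v) = s(v,u) := fun u v => Sym2.eq_swap
  rcases hx with h | h | h <;> rw [Sym2.eq_iff] at h <;>
    rcases h with ⟨rfl, rfl⟩ | ⟨rfl, rfl⟩
  · exact ⟨t, h3, h2, by rcases he with h|h|h <;> subst h <;> simp only [Sym2.eq_iff] <;> tauto⟩
  · exact ⟨t, h2, h3, by rcases he with h|h|h <;> subst h <;> simp only [Sym2.eq_iff] <;> tauto⟩
  · exact ⟨p, h1.symm, h3.symm, by rcases he with h|h|h <;> subst h <;> simp only [Sym2.eq_iff] <;> tauto⟩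
  · exact ⟨p, h3.symm, h1.symm, by rcases he with h|h|h <;> subst h <;> simp only [Sym2.eq_iff] <;> tauto⟩
  · exact ⟨q, h1, h2.symm, by rcases he with h|h|h <;> subst h <;> simp only [Sym2.eq_iff] <;> tauto⟩
  · exact ⟨q, h2.symm, h1, by rcases he with h|h|h <;> subst h <;> simp only [Sym2.eq_iff] <;> tauto⟩


/-- Deleting the two degree-3 vertices of a copy of `K₄ - e` in a subcubic graph:
if `H - {a,c}` has an injective edge-coloring with 7 colors, so does `H`. -/
theorem extend_coloring_K4_minus_e {V : Type*} [Fintype V] (H : SimpleGraph V)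
    [DecidableRel H.Adj] (hsub : ∀ u : V, H.degree u ≤ 3) (a b c d : V)
    (hab : a ≠ b) (hac : a ≠ c) (had : a ≠ d) (hbc : b ≠ c) (hbd : b ≠ d) (hcd : c ≠ d)
    (e₁ : H.Adj a b) (e₂ : H.Adj b c) (e₃ : H.Adj c d) (e₄ : H.Adj d a) (e₅ : H.Adj a c)
    (hnbd : ¬ H.Adj b d)
    (hcol : ∃ f : Sym2 (({a, c}ᶜ : Set V)) → Fin 7,
      IsInjEdgeColoring (H.induce ({a, c}ᶜ : Set V)) f) :
    ∃ f : Sym2 V → Fin 7, IsInjEdgeColoring H f := by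
  classical
  set S : Set V := {a, c}ᶜ with hS
  obtain ⟨g, hg⟩ := hcol
  have haS : a ∉ S := by simp [hS]
  have hcS : c ∉ S := by simp [hS]
  have hbS : b ∈ S := by simp [hS, Ne.symm hab, hbc]
  have hdS : d ∈ S := by simp [hS, Ne.symm had, Ne.symm hcd]
  -- neighbor classification for a and c
  have hNa : ∀ w, H.Adj a w → w = b ∨ w = c ∨ w = d := by
    intro w hw
    have hsubs : ({b, c, d} : Finset V) ⊆ H.neighborFinset a := by
      intro x hx
      simp only [Finset.mem_insert, Finset.mem_singleton] at hx
      rcases hx with rfl | rfl | rfl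
      · exact (H.mem_neighborFinset a x).mpr e₁
      · exact (H.mem_neighborFinset a x).mpr e₅
      · exact (H.mem_neighborFinset a x).mpr e₄.symm
    have hcard : ({b, c, d} : Finset V).card = 3 := by
      rw [Finset.card_insert_of_notMem (by simp [hbc, hbd]),
        Finset.card_insert_of_notMem (by simp [hcd])]
      simp
    have heq : H.neighborFinset a = {b, c, d} :=
      (Finset.eq_of_subset_of_card_le hsubs (by rw [hcard, SimpleGraph.card_neighborFinset_eq_degree]; exact hsub _)).symm
    have : w ∈ H.neighborFinset a := (H.mem_neighborFinset a w).mpr hw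
    rw [heq] at this
    simpa using this
  have hNc : ∀ w, H.Adj c w → w = a ∨ w = b ∨ w = d := by
    intro w hw
    have hsubs : ({a, b, d} : Finset V) ⊆ H.neighborFinset c := by
      intro x hx
      simp only [Finset.mem_insert, Finset.mem_singleton] at hx
      rcases hx with rfl | rfl | rfl
      · exact (H.mem_neighborFinset c x).mpr e₅.symm
      · exact (H.mem_neighborFinset c x).mpr e₂.symm
      · exact (H.mem_neighborFinset c x).mpr e₃
    have hcard : ({a, b, d} : Finset V).card = 3 := by
      rw [Finset.card_insert_of_notMem (by simp [hab, had]),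
        Finset.card_insert_of_notMem (by simp [hbd])]
      simp
    have heq : H.neighborFinset c = {a, b, d} :=
      (Finset.eq_of_subset_of_card_le hsubs (by rw [hcard, SimpleGraph.card_neighborFinset_eq_degree]; exact hsub _)).symm
    have : w ∈ H.neighborFinset c := (H.mem_neighborFinset c w).mpr hw
    rw [heq] at this
    simpa using this
  -- classification of edges
  have hclass : ∀ e ∈ H.edgeSet, (∀ x ∈ e, x ∈ S) ∨
      e = s(a,b) ∨ e = s(b,c) ∨ e = s(c,d) ∨ e = s(a,d) ∨ e = s(a,c) := by
    intro e he
    induction e using Sym2.ind with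
    | _ u v =>
      have huv : H.Adj u v := H.mem_edgeSet.mp he
      by_cases hu : u ∈ S
      · by_cases hv : v ∈ S
        · left; intro x hx; rcases Sym2.mem_iff.mp hx with rfl | rfl <;> assumption
        · right
          have hv' : v = a ∨ v = c := by
            by_contra hcon
            push_neg at hcon
            exact hv (by simp [hS, hcon.1, hcon.2])
          rcases hv' with rfl | rfl
          · rcases hNa u huv.symm with rfl | rfl | rfl
            · left; exact Sym2.eq_swap
            · exact absurd hu hcS
            · right; right; right; left; exact Sym2.eq_swap
          · rcases hNc u huv.symm with rfl | rfl | rfl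
            · exact absurd hu haS
            · right; left; rfl
            · right; right; left; exact Sym2.eq_swap
      · right
        have hu' : u = a ∨ u = c := by
          by_contra hcon
          push_neg at hcon
          exact hu (by simp [hS, hcon.1, hcon.2])
        rcases hu' with rfl | rfl
        · rcases hNa v huv with rfl | rfl | rfl
          · left; rfl
          · right; right; right; right; rfl
          · right; right; right; left; rfl
        · rcases hNc v huv with rfl | rfl | rfl
          · right; right; right; right; exact Sym2.eq_swap
          · right; left; exact Sym2.eq_swap
          · right; right; left; rfl
  -- restriction map and old-edge colors
  let r : V → S := fun v => if h : v ∈ S then ⟨v, h⟩ else ⟨b, hbS⟩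
  let colorOf : Sym2 V → Fin 7 := fun e => g (Sym2.map r e)
  have hrr : ∀ (v : V) (hv : v ∈ S), r v = ⟨v, hv⟩ := by
    intro v hv; simp only [r, dif_pos hv]
  -- "other neighbor" finsets
  let Wb : Finset V := H.neighborFinset b \ {a, c}
  let Wd : Finset V := H.neighborFinset d \ {a, c}
  have hWb : ∀ w, w ∈ Wb ↔ H.Adj b w ∧ w ≠ a ∧ w ≠ c := by
    intro w
    simp only [Wb, Finset.mem_sdiff, H.mem_neighborFinset, Finset.mem_insert,
      Finset.mem_singleton]
    tauto
  have hWd : ∀ w, w ∈ Wd ↔ H.Adj d w ∧ w ≠ a ∧ w ≠ c := by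
    intro w
    simp only [Wd, Finset.mem_sdiff, H.mem_neighborFinset, Finset.mem_insert,
      Finset.mem_singleton]
    tauto
  have hWbcard : Wb.card ≤ 1 := by
    have hsubs : ({a, c} : Finset V) ⊆ H.neighborFinset b := by
      intro x hx
      simp only [Finset.mem_insert, Finset.mem_singleton] at hx
      rcases hx with rfl | rfl
      · exact (H.mem_neighborFinset b x).mpr e₁.symm
      · exact (H.mem_neighborFinset b x).mpr e₂
    have h2 : ({a, c} : Finset V).card = 2 := by
      rw [Finset.card_insert_of_notMem (by simp [hac])]; simp
    have := Finset.card_sdiff_of_subset hsubs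
    have hdeg : (H.neighborFinset b).card ≤ 3 := by
      rw [SimpleGraph.card_neighborFinset_eq_degree]; exact hsub b
    simp only [Wb]
    omega
  have hWdcard : Wd.card ≤ 1 := by
    have hsubs : ({a, c} : Finset V) ⊆ H.neighborFinset d := by
      intro x hx
      simp only [Finset.mem_insert, Finset.mem_singleton] at hx
      rcases hx with rfl | rfl
      · exact (H.mem_neighborFinset d x).mpr e₄
      · exact (H.mem_neighborFinset d x).mpr e₃.symm
    have h2 : ({a, c} : Finset V).card = 2 := by
      rw [Finset.card_insert_of_notMem (by simp [hac])]; simp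
    have := Finset.card_sdiff_of_subset hsubs
    have hdeg : (H.neighborFinset d).card ≤ 3 := by
      rw [SimpleGraph.card_neighborFinset_eq_degree]; exact hsub d
    simp only [Wd]
    omega
  -- forbidden color sets
  let Cb : Finset (Fin 7) := Wb.image (fun w => colorOf s(b, w))
  let Cd : Finset (Fin 7) := Wd.image (fun w => colorOf s(d, w))
  let Eb : Finset (Fin 7) :=
    Wb.biUnion (fun w => ((H.incidenceFinset w).erase s(b, w)).image colorOf)
  let Ed : Finset (Fin 7) :=
    Wd.biUnion (fun w => ((H.incidenceFinset w).erase s(d, w)).image colorOf)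
  have hCb : Cb.card ≤ 1 := le_trans (Finset.card_image_le) hWbcard
  have hCd : Cd.card ≤ 1 := le_trans (Finset.card_image_le) hWdcard
  have hEb : Eb.card ≤ 2 := by
    refine le_trans (Finset.card_biUnion_le) ?_
    refine le_trans (Finset.sum_le_card_nsmul _ _ 2 ?_) (by simpa using Nat.mul_le_mul_right 2 hWbcard)
    intro w hw
    refine le_trans Finset.card_image_le ?_
    have hmem : s(b, w) ∈ H.incidenceFinset w := by
      rw [SimpleGraph.mem_incidenceFinset]
      exact ⟨((hWb w).mp hw).1, by simp⟩
    rw [Finset.card_erase_of_mem hmem, SimpleGraph.card_incidenceFinset_eq_degree]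
    have := hsub w
    omega
  have hEd : Ed.card ≤ 2 := by
    refine le_trans (Finset.card_biUnion_le) ?_
    refine le_trans (Finset.sum_le_card_nsmul _ _ 2 ?_) (by simpa using Nat.mul_le_mul_right 2 hWdcard)
    intro w hw
    refine le_trans Finset.card_image_le ?_
    have hmem : s(d, w) ∈ H.incidenceFinset w := by
      rw [SimpleGraph.mem_incidenceFinset]
      exact ⟨((hWd w).mp hw).1, by simp⟩
    rw [Finset.card_erase_of_mem hmem, SimpleGraph.card_incidenceFinset_eq_degree]
    have := hsub w
    omega
  -- choose the five colors
  have hchoose : ∀ X : Finset (Fin 7), X.card < 7 → ∃ x : Fin 7, x ∉ X := by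
    intro X hX
    by_contra hcon
    push_neg at hcon
    have : (Finset.univ : Finset (Fin 7)) ⊆ X := fun x _ => hcon x
    have := Finset.card_le_card this
    simp at this
    omega
  obtain ⟨y1, hy1⟩ : ∃ x : Fin 7, x ∉ Cd ∪ Eb := by
    refine hchoose _ (lt_of_le_of_lt (Finset.card_union_le _ _) ?_)
    omega
  obtain ⟨y2, hy2⟩ : ∃ x : Fin 7, x ∉ Cb ∪ Ed := by
    refine hchoose _ (lt_of_le_of_lt (Finset.card_union_le _ _) ?_)
    omega
  obtain ⟨z, hz⟩ : ∃ x : Fin 7, x ∉ (Cb ∪ Cd) ∪ {y1, y2} := by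
    refine hchoose _ (lt_of_le_of_lt (Finset.card_union_le _ _) ?_)
    have h1 := Finset.card_union_le Cb Cd
    have h2 : ({y1, y2} : Finset (Fin 7)).card ≤ 2 :=
      le_trans (Finset.card_insert_le _ _) (by simp)
    omega
  obtain ⟨x1, hx1⟩ : ∃ x : Fin 7, x ∉ (Cd ∪ Eb) ∪ {y1, y2, z} := by
    refine hchoose _ (lt_of_le_of_lt (Finset.card_union_le _ _) ?_)
    have h1 := Finset.card_union_le Cd Eb
    have h2 : ({y1, y2, z} : Finset (Fin 7)).card ≤ 3 :=
      le_trans (Finset.card_insert_le _ _) (by have := Finset.card_insert_le y2 ({z} : Finset (Fin 7)); rw [Finset.card_singleton] at this; omega)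
    omega
  obtain ⟨x2, hx2⟩ : ∃ x : Fin 7, x ∉ (Cb ∪ Ed) ∪ {y1, y2, z} := by
    refine hchoose _ (lt_of_le_of_lt (Finset.card_union_le _ _) ?_)
    have h1 := Finset.card_union_le Cb Ed
    have h2 : ({y1, y2, z} : Finset (Fin 7)).card ≤ 3 :=
      le_trans (Finset.card_insert_le _ _) (by have := Finset.card_insert_le y2 ({z} : Finset (Fin 7)); rw [Finset.card_singleton] at this; omega)
    omega
  simp only [Finset.mem_union, Finset.mem_insert, Finset.mem_singleton, not_or] at hy1 hy2 hz hx1 hx2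
  obtain ⟨⟨hzCb, hzCd⟩, hzy1, hzy2⟩ := hz
  obtain ⟨⟨hx1Cd, hx1Eb⟩, hx1y1, hx1y2, hx1z⟩ := hx1
  obtain ⟨⟨hx2Cb, hx2Ed⟩, hx2y1, hx2y2, hx2z⟩ := hx2
  obtain ⟨hy1Cd, hy1Eb⟩ := hy1
  obtain ⟨hy2Cb, hy2Ed⟩ := hy2
  -- the extended coloring
  let f : Sym2 V → Fin 7 := fun e =>
    if e = s(a,b) then x1 else if e = s(a,d) then x2 else if e = s(b,c) then y1
    else if e = s(c,d) then y2 else if e = s(a,c) then z else colorOf e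
  have hSne : ∀ x, x ∈ S → x ≠ a ∧ x ≠ c := by
    intro x hx
    simp only [hS, Set.mem_compl_iff, Set.mem_insert_iff, Set.mem_singleton_iff, not_or] at hx
    exact hx
  have hCdmem : ∀ u v, H.Adj u v → u ∈ S → v ∈ S → (u = d ∨ v = d) →
      colorOf s(u,v) ∈ Cd := by
    intro u v huv hu hv hd
    rcases hd with h | h
    · rw [h] at huv ⊢
      exact Finset.mem_image.mpr ⟨v, (hWd v).mpr ⟨huv, (hSne v hv).1, (hSne v hv).2⟩, rfl⟩
    · rw [h] at huv ⊢
      rw [show s(u,d) = s(d,u) from Sym2.eq_swap]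
      exact Finset.mem_image.mpr ⟨u, (hWd u).mpr ⟨huv.symm, (hSne u hu).1, (hSne u hu).2⟩, rfl⟩
  have hCbmem : ∀ u v, H.Adj u v → u ∈ S → v ∈ S → (u = b ∨ v = b) →
      colorOf s(u,v) ∈ Cb := by
    intro u v huv hu hv hb
    rcases hb with h | h
    · rw [h] at huv ⊢
      exact Finset.mem_image.mpr ⟨v, (hWb v).mpr ⟨huv, (hSne v hv).1, (hSne v hv).2⟩, rfl⟩
    · rw [h] at huv ⊢
      rw [show s(u,b) = s(b,u) from Sym2.eq_swap]
      exact Finset.mem_image.mpr ⟨u, (hWb u).mpr ⟨huv.symm, (hSne u hu).1, (hSne u hu).2⟩, rfl⟩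
  have hEbmem : ∀ (e' : Sym2 V), e' ∈ H.edgeSet → b ∉ e' → ∀ q ∈ e', H.Adj b q →
      q ≠ a → q ≠ c → colorOf e' ∈ Eb := by
    intro e' he' hbe' q hq hbq hqa hqc
    refine Finset.mem_biUnion.mpr ⟨q, (hWb q).mpr ⟨hbq, hqa, hqc⟩, ?_⟩
    refine Finset.mem_image.mpr ⟨e', Finset.mem_erase.mpr ⟨?_, ?_⟩, rfl⟩
    · rintro rfl; exact hbe' (by simp)
    · rw [SimpleGraph.mem_incidenceFinset]; exact ⟨he', hq⟩
  have hEdmem : ∀ (e' : Sym2 V), e' ∈ H.edgeSet → d ∉ e' → ∀ q ∈ e', H.Adj d q →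
      q ≠ a → q ≠ c → colorOf e' ∈ Ed := by
    intro e' he' hde' q hq hdq hqa hqc
    refine Finset.mem_biUnion.mpr ⟨q, (hWd q).mpr ⟨hdq, hqa, hqc⟩, ?_⟩
    refine Finset.mem_image.mpr ⟨e', Finset.mem_erase.mpr ⟨?_, ?_⟩, rfl⟩
    · rintro rfl; exact hde' (by simp)
    · rw [SimpleGraph.mem_incidenceFinset]; exact ⟨he', hq⟩
  have hmemS : ∀ (x u v : V), x ∈ s(u,v) → u ∈ S → v ∈ S → x ∈ S := by
    intro x u v hx hu hv
    rcases Sym2.mem_iff.mp hx with h | h <;> rw [h] <;> assumption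
  have HB_ab : ∀ u v, H.Adj u v → u ∈ S → v ∈ S → EdgeConflict H s(a,b) s(u,v) →
      colorOf s(u,v) ∈ Cd ∪ Eb := by
    intro u v huv hu hv hc
    obtain ⟨hne, ⟨hdisj, p, hp, q, hq, hadj⟩ | ⟨p', q', t', h1, h2, h3, m1, m2⟩⟩ := hc
    · rcases Sym2.mem_iff.mp hp with hpa | hpb
      · rw [hpa] at hadj
        rcases hNa q hadj with h | h | h
        · rw [h] at hq; exact absurd hq (hdisj b (by simp))
        · rw [h] at hq; exact absurd (hmemS c u v hq hu hv) hcS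
        · rw [h] at hq
          refine Finset.mem_union_left _ (hCdmem u v huv hu hv ?_)
          rcases Sym2.mem_iff.mp hq with h' | h'
          · exact Or.inl h'.symm
          · exact Or.inr h'.symm
      · rw [hpb] at hadj
        have hqS : q ∈ S := hmemS q u v hq hu hv
        exact Finset.mem_union_right _
          (hEbmem s(u,v) (H.mem_edgeSet.mpr huv) (hdisj b (by simp)) q hq hadj
            (hSne q hqS).1 (hSne q hqS).2)
    · exfalso
      obtain ⟨w, hw1, hw2, hm⟩ := triangle_aux h1 h2 h3 m1 m2
      simp only [Set.mem_insert_iff, Set.mem_singleton_iff] at hm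
      rcases hm with h | h | h
      · exact hne h.symm
      · have : a ∈ s(u,v) := by rw [h]; simp
        exact haS (hmemS a u v this hu hv)
      · rcases hNa w hw1 with h' | h' | h'
        · rw [h'] at hw2; exact H.loopless.irrefl b hw2
        · rw [h'] at h
          have : c ∈ s(u,v) := by rw [h]; simp
          exact hcS (hmemS c u v this hu hv)
        · rw [h'] at hw2; exact hnbd hw2
  have HB_bc : ∀ u v, H.Adj u v → u ∈ S → v ∈ S → EdgeConflict H s(b,c) s(u,v) →
      colorOf s(u,v) ∈ Cd ∪ Eb := by
    intro u v huv hu hv hc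
    obtain ⟨hne, ⟨hdisj, p, hp, q, hq, hadj⟩ | ⟨p', q', t', h1, h2, h3, m1, m2⟩⟩ := hc
    · rcases Sym2.mem_iff.mp hp with hpb | hpc
      · rw [hpb] at hadj
        have hqS : q ∈ S := hmemS q u v hq hu hv
        exact Finset.mem_union_right _
          (hEbmem s(u,v) (H.mem_edgeSet.mpr huv) (hdisj b (by simp)) q hq hadj
            (hSne q hqS).1 (hSne q hqS).2)
      · rw [hpc] at hadj
        rcases hNc q hadj with h | h | h
        · rw [h] at hq; exact absurd (hmemS a u v hq hu hv) haS
        · rw [h] at hq; exact absurd hq (hdisj b (by simp))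
        · rw [h] at hq
          refine Finset.mem_union_left _ (hCdmem u v huv hu hv ?_)
          rcases Sym2.mem_iff.mp hq with h' | h'
          · exact Or.inl h'.symm
          · exact Or.inr h'.symm
    · exfalso
      obtain ⟨w, hw1, hw2, hm⟩ := triangle_aux h1 h2 h3 m1 m2
      simp only [Set.mem_insert_iff, Set.mem_singleton_iff] at hm
      rcases hm with h | h | h
      · exact hne h.symm
      · rcases hNc w hw2 with h' | h' | h'
        · rw [h'] at h
          have : a ∈ s(u,v) := by rw [h]; simp
          exact haS (hmemS a u v this hu hv)
        · rw [h'] at hw1; exact H.loopless.irrefl b hw1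
        · rw [h'] at hw1; exact hnbd hw1
      · have : c ∈ s(u,v) := by rw [h]; simp
        exact hcS (hmemS c u v this hu hv)
  have HB_ad : ∀ u v, H.Adj u v → u ∈ S → v ∈ S → EdgeConflict H s(a,d) s(u,v) →
      colorOf s(u,v) ∈ Cb ∪ Ed := by
    intro u v huv hu hv hc
    obtain ⟨hne, ⟨hdisj, p, hp, q, hq, hadj⟩ | ⟨p', q', t', h1, h2, h3, m1, m2⟩⟩ := hc
    · rcases Sym2.mem_iff.mp hp with hpa | hpd
      · rw [hpa] at hadj
        rcases hNa q hadj with h | h | h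
        · rw [h] at hq
          refine Finset.mem_union_left _ (hCbmem u v huv hu hv ?_)
          rcases Sym2.mem_iff.mp hq with h' | h'
          · exact Or.inl h'.symm
          · exact Or.inr h'.symm
        · rw [h] at hq; exact absurd (hmemS c u v hq hu hv) hcS
        · rw [h] at hq; exact absurd hq (hdisj d (by simp))
      · rw [hpd] at hadj
        have hqS : q ∈ S := hmemS q u v hq hu hv
        exact Finset.mem_union_right _
          (hEdmem s(u,v) (H.mem_edgeSet.mpr huv) (hdisj d (by simp)) q hq hadj
            (hSne q hqS).1 (hSne q hqS).2)
    · exfalso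
      obtain ⟨w, hw1, hw2, hm⟩ := triangle_aux h1 h2 h3 m1 m2
      simp only [Set.mem_insert_iff, Set.mem_singleton_iff] at hm
      rcases hm with h | h | h
      · exact hne h.symm
      · have : a ∈ s(u,v) := by rw [h]; simp
        exact haS (hmemS a u v this hu hv)
      · rcases hNa w hw1 with h' | h' | h'
        · rw [h'] at hw2; exact hnbd hw2.symm
        · rw [h'] at h
          have : c ∈ s(u,v) := by rw [h]; simp
          exact hcS (hmemS c u v this hu hv)
        · rw [h'] at hw2; exact H.loopless.irrefl d hw2
  have HB_cd : ∀ u v, H.Adj u v → u ∈ S → v ∈ S → EdgeConflict H s(c,d) s(u,v) →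
      colorOf s(u,v) ∈ Cb ∪ Ed := by
    intro u v huv hu hv hc
    obtain ⟨hne, ⟨hdisj, p, hp, q, hq, hadj⟩ | ⟨p', q', t', h1, h2, h3, m1, m2⟩⟩ := hc
    · rcases Sym2.mem_iff.mp hp with hpc | hpd
      · rw [hpc] at hadj
        rcases hNc q hadj with h | h | h
        · rw [h] at hq; exact absurd (hmemS a u v hq hu hv) haS
        · rw [h] at hq
          refine Finset.mem_union_left _ (hCbmem u v huv hu hv ?_)
          rcases Sym2.mem_iff.mp hq with h' | h'
          · exact Or.inl h'.symm
          · exact Or.inr h'.symm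
        · rw [h] at hq; exact absurd hq (hdisj d (by simp))
      · rw [hpd] at hadj
        have hqS : q ∈ S := hmemS q u v hq hu hv
        exact Finset.mem_union_right _
          (hEdmem s(u,v) (H.mem_edgeSet.mpr huv) (hdisj d (by simp)) q hq hadj
            (hSne q hqS).1 (hSne q hqS).2)
    · exfalso
      obtain ⟨w, hw1, hw2, hm⟩ := triangle_aux h1 h2 h3 m1 m2
      simp only [Set.mem_insert_iff, Set.mem_singleton_iff] at hm
      rcases hm with h | h | h
      · exact hne h.symm
      · have : c ∈ s(u,v) := by rw [h]; simp
        exact hcS (hmemS c u v this hu hv)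
      · rcases hNc w hw1 with h' | h' | h'
        · rw [h'] at h
          have : a ∈ s(u,v) := by rw [h]; simp
          exact haS (hmemS a u v this hu hv)
        · rw [h'] at hw2; exact hnbd hw2.symm
        · rw [h'] at hw2; exact H.loopless.irrefl d hw2
  have HB_ac : ∀ u v, H.Adj u v → u ∈ S → v ∈ S → EdgeConflict H s(a,c) s(u,v) →
      colorOf s(u,v) ∈ Cb ∪ Cd := by
    intro u v huv hu hv hc
    obtain ⟨hne, ⟨hdisj, p, hp, q, hq, hadj⟩ | ⟨p', q', t', h1, h2, h3, m1, m2⟩⟩ := hc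
    · have hCbgoal : q = b → colorOf s(u,v) ∈ Cb ∪ Cd := by
        intro h
        rw [h] at hq
        refine Finset.mem_union_left _ (hCbmem u v huv hu hv ?_)
        rcases Sym2.mem_iff.mp hq with h' | h'
        · exact Or.inl h'.symm
        · exact Or.inr h'.symm
      have hCdgoal : q = d → colorOf s(u,v) ∈ Cb ∪ Cd := by
        intro h
        rw [h] at hq
        refine Finset.mem_union_right _ (hCdmem u v huv hu hv ?_)
        rcases Sym2.mem_iff.mp hq with h' | h'
        · exact Or.inl h'.symm
        · exact Or.inr h'.symm
      rcases Sym2.mem_iff.mp hp with hpa | hpc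
      · rw [hpa] at hadj
        rcases hNa q hadj with h | h | h
        · exact hCbgoal h
        · rw [h] at hq; exact absurd (hmemS c u v hq hu hv) hcS
        · exact hCdgoal h
      · rw [hpc] at hadj
        rcases hNc q hadj with h | h | h
        · rw [h] at hq; exact absurd (hmemS a u v hq hu hv) haS
        · exact hCbgoal h
        · exact hCdgoal h
    · exfalso
      obtain ⟨w, hw1, hw2, hm⟩ := triangle_aux h1 h2 h3 m1 m2
      simp only [Set.mem_insert_iff, Set.mem_singleton_iff] at hm
      rcases hm with h | h | h
      · exact hne h.symm
      · have : a ∈ s(u,v) := by rw [h]; simp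
        exact haS (hmemS a u v this hu hv)
      · have : c ∈ s(u,v) := by rw [h]; simp
        exact hcS (hmemS c u v this hu hv)
  -- inequalities between the five special edges
  have n_ad_ab : s(a,d) ≠ s(a,b) := by
    rw [Ne, Sym2.eq_iff]; rintro (⟨-, h⟩ | ⟨h, -⟩); exacts [hbd h.symm, hab h]
  have n_bc_ab : s(b,c) ≠ s(a,b) := by
    rw [Ne, Sym2.eq_iff]; rintro (⟨h, -⟩ | ⟨-, h⟩); exacts [hab h.symm, hac h.symm]
  have n_bc_ad : s(b,c) ≠ s(a,d) := by
    rw [Ne, Sym2.eq_iff]; rintro (⟨h, -⟩ | ⟨h, -⟩); exacts [hab h.symm, hbd h]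
  have n_cd_ab : s(c,d) ≠ s(a,b) := by
    rw [Ne, Sym2.eq_iff]; rintro (⟨h, -⟩ | ⟨h, -⟩); exacts [hac h.symm, hbc h.symm]
  have n_cd_ad : s(c,d) ≠ s(a,d) := by
    rw [Ne, Sym2.eq_iff]; rintro (⟨h, -⟩ | ⟨h, -⟩); exacts [hac h.symm, hcd h]
  have n_cd_bc : s(c,d) ≠ s(b,c) := by
    rw [Ne, Sym2.eq_iff]; rintro (⟨h, -⟩ | ⟨-, h⟩); exacts [hbc h.symm, hbd h.symm]
  have n_ac_ab : s(a,c) ≠ s(a,b) := by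
    rw [Ne, Sym2.eq_iff]; rintro (⟨-, h⟩ | ⟨h, -⟩); exacts [hbc h.symm, hab h]
  have n_ac_ad : s(a,c) ≠ s(a,d) := by
    rw [Ne, Sym2.eq_iff]; rintro (⟨-, h⟩ | ⟨h, -⟩); exacts [hcd h, had h]
  have n_ac_bc : s(a,c) ≠ s(b,c) := by
    rw [Ne, Sym2.eq_iff]; rintro (⟨h, -⟩ | ⟨h, -⟩); exacts [hab h, hac h]
  have n_ac_cd : s(a,c) ≠ s(c,d) := by
    rw [Ne, Sym2.eq_iff]; rintro (⟨h, -⟩ | ⟨h, -⟩); exacts [hac h, had h]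
  -- evaluation of f
  have hfab : f s(a,b) = x1 := by simp only [f]; simp
  have hfad : f s(a,d) = x2 := by simp only [f]; rw [if_neg n_ad_ab]; simp
  have hfbc : f s(b,c) = y1 := by
    simp only [f]; rw [if_neg n_bc_ab, if_neg n_bc_ad]; simp
  have hfcd : f s(c,d) = y2 := by
    simp only [f]; rw [if_neg n_cd_ab, if_neg n_cd_ad, if_neg n_cd_bc]; simp
  have hfac : f s(a,c) = z := by
    simp only [f]
    rw [if_neg n_ac_ab, if_neg n_ac_ad, if_neg n_ac_bc, if_neg n_ac_cd]; simp
  have hnotnew1 : ∀ (u v p q : V), u ∈ S → v ∈ S → p ∉ S → s(u,v) ≠ s(p,q) := by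
    intro u v p q hu hv hp heq
    have : p ∈ s(u,v) := by rw [heq]; simp
    exact hp (hmemS p u v this hu hv)
  have hnotnew2 : ∀ (u v p q : V), u ∈ S → v ∈ S → q ∉ S → s(u,v) ≠ s(p,q) := by
    intro u v p q hu hv hq heq
    have : q ∈ s(u,v) := by rw [heq]; simp
    exact hq (hmemS q u v this hu hv)
  have hfold : ∀ u v, u ∈ S → v ∈ S → f s(u,v) = colorOf s(u,v) := by
    intro u v hu hv
    simp only [f]
    rw [if_neg (hnotnew1 u v a b hu hv haS), if_neg (hnotnew1 u v a d hu hv haS),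
      if_neg (hnotnew2 u v b c hu hv hcS), if_neg (hnotnew1 u v c d hu hv hcS),
      if_neg (hnotnew1 u v a c hu hv haS)]
  have hcolorOf : ∀ (u v : V) (hu : u ∈ S) (hv : v ∈ S),
      colorOf s(u,v) = g s(⟨u,hu⟩,⟨v,hv⟩) := by
    intro u v hu hv
    simp only [colorOf]
    rw [Sym2.map_pair_eq, hrr u hu, hrr v hv]
  have lift_eq : ∀ (x y x' y' : V) (hx : x ∈ S) (hy : y ∈ S) (hx' : x' ∈ S) (hy' : y' ∈ S),
      s(x,y) = s(x',y') →
      s((⟨x,hx⟩ : S),(⟨y,hy⟩ : S)) = s((⟨x',hx'⟩ : S),(⟨y',hy'⟩ : S)) := by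
    intro x y x' y' hx hy hx' hy' h
    rw [Sym2.eq_iff] at h ⊢
    rcases h with ⟨h1, h2⟩ | ⟨h1, h2⟩
    · exact Or.inl ⟨Subtype.ext h1, Subtype.ext h2⟩
    · exact Or.inr ⟨Subtype.ext h1, Subtype.ext h2⟩
  have Hold : ∀ u v u' v', H.Adj u v → H.Adj u' v' → ∀ (hu : u ∈ S) (hv : v ∈ S)
      (hu' : u' ∈ S) (hv' : v' ∈ S), EdgeConflict H s(u,v) s(u',v') →
      colorOf s(u,v) ≠ colorOf s(u',v') := by
    intro u v u' v' huv hu'v' hu hv hu' hv' hc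
    rw [hcolorOf u v hu hv, hcolorOf u' v' hu' hv']
    have hadj1 : (H.induce S).Adj ⟨u,hu⟩ ⟨v,hv⟩ := by simpa using huv
    have hadj2 : (H.induce S).Adj ⟨u',hu'⟩ ⟨v',hv'⟩ := by simpa using hu'v'
    apply hg _ ((H.induce S).mem_edgeSet.mpr hadj1) _ ((H.induce S).mem_edgeSet.mpr hadj2)
    obtain ⟨hne, hcases⟩ := hc
    constructor
    · intro heq
      apply hne
      have := congrArg (Sym2.map (Subtype.val : S → V)) heq
      rwa [Sym2.map_pair_eq, Sym2.map_pair_eq] at this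
    · rcases hcases with ⟨hdisj, p, hp, q, hq, hadj⟩ | ⟨p, q, t, h1, h2, h3, m1, m2⟩
      · left
        constructor
        · rintro x hx hx'
          apply hdisj x.val
          · rcases Sym2.mem_iff.mp hx with h | h <;> rw [h] <;> simp
          · rcases Sym2.mem_iff.mp hx' with h | h <;> rw [h] <;> simp
        · rcases Sym2.mem_iff.mp hp with h | h <;> rcases Sym2.mem_iff.mp hq with h' | h' <;>
            rw [h, h'] at hadj
          · exact ⟨⟨u,hu⟩, by simp, ⟨u',hu'⟩, by simp, by simpa using hadj⟩
          · exact ⟨⟨u,hu⟩, by simp, ⟨v',hv'⟩, by simp, by simpa using hadj⟩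
          · exact ⟨⟨v,hv⟩, by simp, ⟨u',hu'⟩, by simp, by simpa using hadj⟩
          · exact ⟨⟨v,hv⟩, by simp, ⟨v',hv'⟩, by simp, by simpa using hadj⟩
      · right
        simp only [Set.mem_insert_iff, Set.mem_singleton_iff] at m1 m2
        have hP : p ∈ S := by
          by_contra hp'
          have h1' : s(u,v) = s(q,t) := by
            rcases m1 with h | h | h
            · exfalso
              have : p ∈ s(u,v) := by rw [h]; simp
              exact hp' (hmemS p u v this hu hv)
            · exact h
            · exfalso
              have : p ∈ s(u,v) := by rw [h]; simp
              exact hp' (hmemS p u v this hu hv)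
          have h2' : s(u',v') = s(q,t) := by
            rcases m2 with h | h | h
            · exfalso
              have : p ∈ s(u',v') := by rw [h]; simp
              exact hp' (hmemS p u' v' this hu' hv')
            · exact h
            · exfalso
              have : p ∈ s(u',v') := by rw [h]; simp
              exact hp' (hmemS p u' v' this hu' hv')
          exact hne (h1'.trans h2'.symm)
        have hQ : q ∈ S := by
          by_contra hq'
          have h1' : s(u,v) = s(p,t) := by
            rcases m1 with h | h | h
            · exfalso
              have : q ∈ s(u,v) := by rw [h]; simp
              exact hq' (hmemS q u v this hu hv)
            · exfalso
              have : q ∈ s(u,v) := by rw [h]; simp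
              exact hq' (hmemS q u v this hu hv)
            · exact h
          have h2' : s(u',v') = s(p,t) := by
            rcases m2 with h | h | h
            · exfalso
              have : q ∈ s(u',v') := by rw [h]; simp
              exact hq' (hmemS q u' v' this hu' hv')
            · exfalso
              have : q ∈ s(u',v') := by rw [h]; simp
              exact hq' (hmemS q u' v' this hu' hv')
            · exact h
          exact hne (h1'.trans h2'.symm)
        have hT : t ∈ S := by
          by_contra ht'
          have h1' : s(u,v) = s(p,q) := by
            rcases m1 with h | h | h
            · exact h
            · exfalso
              have : t ∈ s(u,v) := by rw [h]; simp
              exact ht' (hmemS t u v this hu hv)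
            · exfalso
              have : t ∈ s(u,v) := by rw [h]; simp
              exact ht' (hmemS t u v this hu hv)
          have h2' : s(u',v') = s(p,q) := by
            rcases m2 with h | h | h
            · exact h
            · exfalso
              have : t ∈ s(u',v') := by rw [h]; simp
              exact ht' (hmemS t u' v' this hu' hv')
            · exfalso
              have : t ∈ s(u',v') := by rw [h]; simp
              exact ht' (hmemS t u' v' this hu' hv')
          exact hne (h1'.trans h2'.symm)
        refine ⟨⟨p,hP⟩, ⟨q,hQ⟩, ⟨t,hT⟩, by simpa using h1, by simpa using h2,
          by simpa using h3, ?_, ?_⟩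
        · simp only [Set.mem_insert_iff, Set.mem_singleton_iff]
          rcases m1 with h | h | h
          · exact Or.inl (lift_eq u v p q hu hv hP hQ h)
          · exact Or.inr (Or.inl (lift_eq u v q t hu hv hQ hT h))
          · exact Or.inr (Or.inr (lift_eq u v p t hu hv hP hT h))
        · simp only [Set.mem_insert_iff, Set.mem_singleton_iff]
          rcases m2 with h | h | h
          · exact Or.inl (lift_eq u' v' p q hu' hv' hP hQ h)
          · exact Or.inr (Or.inl (lift_eq u' v' q t hu' hv' hQ hT h))
          · exact Or.inr (Or.inr (lift_eq u' v' p t hu' hv' hP hT h))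
  -- main goal
  suffices hmain : ∀ u v u' v', H.Adj u v → H.Adj u' v' →
      EdgeConflict H s(u,v) s(u',v') → f s(u,v) ≠ f s(u',v') by
    refine ⟨f, fun ea hea eb heb hc => ?_⟩
    revert hea heb hc
    refine Sym2.inductionOn₂ ea eb ?_
    intro u v u' v' hea heb hc
    exact hmain u v u' v' (H.mem_edgeSet.mp hea) (H.mem_edgeSet.mp heb) hc
  intro u v u' v' huv hu'v' hc
  have hswap : ∀ (p q : V), s(p,q) = s(q,p) := fun p q => Sym2.eq_swap
  -- helpers for the "new vs old" cases
  have old_fval : ∀ (x y : V), (∀ w ∈ s(x,y), w ∈ S) → f s(x,y) = colorOf s(x,y) := by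
    intro x y ho
    exact hfold x y (ho x (by simp)) (ho y (by simp))
  rcases hclass s(u,v) (H.mem_edgeSet.mpr huv) with ho1 | h1' | h1' | h1' | h1' | h1'
  case' inr.inl => rw [h1'] at hc ⊢
  case' inr.inr.inl => rw [h1'] at hc ⊢
  case' inr.inr.inr.inl => rw [h1'] at hc ⊢
  case' inr.inr.inr.inr.inl => rw [h1'] at hc ⊢
  case' inr.inr.inr.inr.inr => rw [h1'] at hc ⊢
  all_goals
    rcases hclass s(u',v') (H.mem_edgeSet.mpr hu'v') with ho2 | h2' | h2' | h2' | h2' | h2'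
  all_goals try rw [h2'] at hc ⊢
  all_goals first
    | exact absurd rfl hc.1
    | (rw [old_fval u v ho1, old_fval u' v' ho2]
       exact Hold u v u' v' huv hu'v' (ho1 u (by simp)) (ho1 v (by simp))
         (ho2 u' (by simp)) (ho2 v' (by simp)) hc)
    | exact absurd hc (not_conflict_shared hbd hnbd)
    | exact absurd hc (not_conflict_shared (Ne.symm hbd) (fun h => hnbd h.symm))
    | (rw [hswap b c] at hc
       first
         | exact absurd hc (not_conflict_shared hbd hnbd)
         | exact absurd hc (not_conflict_shared (Ne.symm hbd) (fun h => hnbd h.symm)))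
    | (simp only [hfab, hfad, hfbc, hfcd, hfac]
       first
         | exact hx1y1 | exact hx1y2 | exact hx1z
         | exact hx2y1 | exact hx2y2 | exact hx2z
         | exact hzy1 | exact hzy2
         | exact fun h => hx1y1 h.symm | exact fun h => hx1y2 h.symm
         | exact fun h => hx1z h.symm | exact fun h => hx2y1 h.symm
         | exact fun h => hx2y2 h.symm | exact fun h => hx2z h.symm
         | exact fun h => hzy1 h.symm | exact fun h => hzy2 h.symm)
    | (rw [hfab, old_fval u' v' ho2]
       intro heq
       rcases Finset.mem_union.mp (HB_ab u' v' hu'v' (ho2 u' (by simp)) (ho2 v' (by simp)) hc)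
         with hm | hm <;> rw [← heq] at hm
       exacts [hx1Cd hm, hx1Eb hm])
    | (rw [hfbc, old_fval u' v' ho2]
       intro heq
       rcases Finset.mem_union.mp (HB_bc u' v' hu'v' (ho2 u' (by simp)) (ho2 v' (by simp)) hc)
         with hm | hm <;> rw [← heq] at hm
       exacts [hy1Cd hm, hy1Eb hm])
    | (rw [hfcd, old_fval u' v' ho2]
       intro heq
       rcases Finset.mem_union.mp (HB_cd u' v' hu'v' (ho2 u' (by simp)) (ho2 v' (by simp)) hc)
         with hm | hm <;> rw [← heq] at hm
       exacts [hy2Cb hm, hy2Ed hm])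
    | (rw [hfad, old_fval u' v' ho2]
       intro heq
       rcases Finset.mem_union.mp (HB_ad u' v' hu'v' (ho2 u' (by simp)) (ho2 v' (by simp)) hc)
         with hm | hm <;> rw [← heq] at hm
       exacts [hx2Cb hm, hx2Ed hm])
    | (rw [hfac, old_fval u' v' ho2]
       intro heq
       rcases Finset.mem_union.mp (HB_ac u' v' hu'v' (ho2 u' (by simp)) (ho2 v' (by simp)) hc)
         with hm | hm <;> rw [← heq] at hm
       exacts [hzCb hm, hzCd hm])
    | (rw [old_fval u v ho1, hfab]
       intro heq
       rcases Finset.mem_union.mp (HB_ab u v huv (ho1 u (by simp)) (ho1 v (by simp)) hc.symm')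
         with hm | hm <;> rw [heq] at hm
       exacts [hx1Cd hm, hx1Eb hm])
    | (rw [old_fval u v ho1, hfbc]
       intro heq
       rcases Finset.mem_union.mp (HB_bc u v huv (ho1 u (by simp)) (ho1 v (by simp)) hc.symm')
         with hm | hm <;> rw [heq] at hm
       exacts [hy1Cd hm, hy1Eb hm])
    | (rw [old_fval u v ho1, hfcd]
       intro heq
       rcases Finset.mem_union.mp (HB_cd u v huv (ho1 u (by simp)) (ho1 v (by simp)) hc.symm')
         with hm | hm <;> rw [heq] at hm
       exacts [hy2Cb hm, hy2Ed hm])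
    | (rw [old_fval u v ho1, hfad]
       intro heq
       rcases Finset.mem_union.mp (HB_ad u v huv (ho1 u (by simp)) (ho1 v (by simp)) hc.symm')
         with hm | hm <;> rw [heq] at hm
       exacts [hx2Cb hm, hx2Ed hm])
    | (rw [old_fval u v ho1, hfac]
       intro heq
       rcases Finset.mem_union.mp (HB_ac u v huv (ho1 u (by simp)) (ho1 v (by simp)) hc.symm')
         with hm | hm <;> rw [heq] at hm
       exacts [hzCb hm, hzCd hm])
end

section
/- Let H be a 3-regular, triangle-free finite simple graph containing a copy of K_{2,3} with parts {x, y, z} and {u, v} (so xu, xv, yu, yv, zu, zv are edges of H). If H − {u,v} admits an injective edge-coloring with 7 colors, then H admits an injective edge-coloring with 7 colors. -/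
open SimpleGraph

lemma deg3_classify {V : Type*} [Fintype V] (H : SimpleGraph V) [DecidableRel H.Adj]
    {w p q r : V} (hdeg : H.degree w = 3) (hpq : p ≠ q) (hpr : p ≠ r) (hqr : q ≠ r)
    (h1 : H.Adj w p) (h2 : H.Adj w q) (h3 : H.Adj w r) :
    ∀ s, H.Adj w s → s = p ∨ s = q ∨ s = r := by
  classical
  intro s hs
  have hsub : ({p, q, r} : Finset V) ⊆ H.neighborFinset w := by
    intro t ht
    simp only [Finset.mem_insert, Finset.mem_singleton] at ht
    rcases ht with rfl | rfl | rfl <;> simp [mem_neighborFinset, *]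
  have hcard : ({p, q, r} : Finset V).card = 3 := by
    rw [Finset.card_insert_of_notMem (by simp [hpq, hpr]),
      Finset.card_insert_of_notMem (by simp [hqr]), Finset.card_singleton]
  have heq : ({p, q, r} : Finset V) = H.neighborFinset w := by
    apply Finset.eq_of_subset_of_card_le hsub
    rw [hcard]
    exact le_of_eq (by rw [← hdeg, degree])
  have : s ∈ ({p, q, r} : Finset V) := by rw [heq]; simpa [mem_neighborFinset] using hs
  simpa using this

lemma exists_third {V : Type*} [Fintype V] (H : SimpleGraph V) [DecidableRel H.Adj]
    {w p q : V} (hdeg : H.degree w = 3) (hpq : p ≠ q)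
    (h1 : H.Adj w p) (h2 : H.Adj w q) :
    ∃ t, H.Adj w t ∧ t ≠ p ∧ t ≠ q ∧ ∀ s, H.Adj w s → s = p ∨ s = q ∨ s = t := by
  classical
  have hsub : ({p, q} : Finset V) ⊆ H.neighborFinset w := by
    intro t ht
    simp only [Finset.mem_insert, Finset.mem_singleton] at ht
    rcases ht with rfl | rfl <;> simp [mem_neighborFinset, *]
  have hlt : ({p, q} : Finset V).card < (H.neighborFinset w).card := by
    rw [Finset.card_insert_of_notMem (by simp [hpq]), Finset.card_singleton]
    have : (H.neighborFinset w).card = 3 := hdeg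
    omega
  have hss : ({p, q} : Finset V) ⊂ H.neighborFinset w :=
    Finset.ssubset_iff_subset_ne.mpr ⟨hsub, fun h => by rw [h] at hlt; omega⟩
  obtain ⟨t, ht, htn⟩ := Finset.exists_of_ssubset hss
  simp only [Finset.mem_insert, Finset.mem_singleton, not_or] at htn
  refine ⟨t, by simpa [mem_neighborFinset] using ht, htn.1, htn.2, ?_⟩
  exact deg3_classify H hdeg hpq (Ne.symm htn.1) (Ne.symm htn.2) h1 h2
    (by simpa [mem_neighborFinset] using ht)

lemma exists_two {V : Type*} [Fintype V] (H : SimpleGraph V) [DecidableRel H.Adj]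
    {w p : V} (hdeg : H.degree w = 3) (h1 : H.Adj w p) :
    ∃ a b, H.Adj w a ∧ H.Adj w b ∧ a ≠ b ∧ a ≠ p ∧ b ≠ p ∧
      ∀ s, H.Adj w s → s = p ∨ s = a ∨ s = b := by
  classical
  have hp : p ∈ H.neighborFinset w := by simpa [mem_neighborFinset] using h1
  have hcard : (H.neighborFinset w \ {p}).card = 2 := by
    rw [Finset.card_sdiff_of_subset (by simpa using hp)]
    simp [hdeg]
  have h2 : 1 < (H.neighborFinset w \ {p}).card := by omega
  obtain ⟨a, ha, b, hb, hab⟩ := Finset.one_lt_card.mp h2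
  simp only [Finset.mem_sdiff, Finset.mem_singleton, mem_neighborFinset] at ha hb
  refine ⟨a, b, ha.1, hb.1, hab, ha.2, hb.2, ?_⟩
  intro s hs
  rcases deg3_classify H hdeg (Ne.symm ha.2) (Ne.symm hb.2) hab h1 ha.1 hb.1 s hs with h|h|h
    <;> tauto


set_option maxRecDepth 8000 in
set_option maxHeartbeats 1000000 in
/-- Deleting the 3-side-neighbors part `{u,v}` of a copy of `K_{2,3}` in a 3-regular
triangle-free graph: if `H - {u,v}` has an injective edge-coloring with 7 colors,
then so does `H`. -/
theorem extend_coloring_K23 {V : Type*} [Fintype V] (H : SimpleGraph V)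
    [DecidableRel H.Adj] (hreg : ∀ a : V, H.degree a = 3) (htf : H.CliqueFree 3)
    (x y z u v : V) (hxy : x ≠ y) (hxz : x ≠ z) (hyz : y ≠ z) (huv : u ≠ v)
    (hxu : H.Adj x u) (hxv : H.Adj x v) (hyu : H.Adj y u) (hyv : H.Adj y v)
    (hzu : H.Adj z u) (hzv : H.Adj z v)
    (hcol : ∃ f : Sym2 (({u, v}ᶜ : Set V)) → Fin 7,
      IsInjEdgeColoring (H.induce ({u, v}ᶜ : Set V)) f) :
    ∃ f : Sym2 V → Fin 7, IsInjEdgeColoring H f := by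
  classical
  obtain ⟨f, hf⟩ := hcol
  -- triangle-freeness in a convenient form
  have tri : ∀ a b c : V, H.Adj a b → H.Adj a c → H.Adj b c → False := by
    intro a b c h1 h2 h3
    exact htf {a, b, c} (is3Clique_triple_iff.mpr ⟨h1, h2, h3⟩)
  -- neighbors of u and v
  have Nu : ∀ s, H.Adj u s → s = x ∨ s = y ∨ s = z :=
    deg3_classify H (hreg u) hxy hxz hyz hxu.symm hyu.symm hzu.symm
  have Nv : ∀ s, H.Adj v s → s = x ∨ s = y ∨ s = z :=
    deg3_classify H (hreg v) hxy hxz hyz hxv.symm hyv.symm hzv.symm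
  -- third neighbors of x, y, z
  obtain ⟨xp, hxxp, hxpu, hxpv, hNx⟩ := exists_third H (hreg x) huv hxu hxv
  obtain ⟨yp, hyyp, hypu, hypv, hNy⟩ := exists_third H (hreg y) huv hyu hyv
  obtain ⟨zp, hzzp, hzpu, hzpv, hNz⟩ := exists_third H (hreg z) huv hzu hzv
  -- the third neighbors are not adjacent to u or v
  have hxpnu : ¬ H.Adj xp u := by
    intro h
    rcases Nu xp h.symm with h' | h' | h'
    · exact H.irrefl (h' ▸ hxxp)
    · exact tri x y u (h' ▸ hxxp) hxu hyu
    · exact tri x z u (h' ▸ hxxp) hxu hzu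
  have hxpnv : ¬ H.Adj xp v := by
    intro h
    rcases Nv xp h.symm with h' | h' | h'
    · exact H.irrefl (h' ▸ hxxp)
    · exact tri x y v (h' ▸ hxxp) hxv hyv
    · exact tri x z v (h' ▸ hxxp) hxv hzv
  have hypnu : ¬ H.Adj yp u := by
    intro h
    rcases Nu yp h.symm with h' | h' | h'
    · exact tri y x u (h' ▸ hyyp) hyu hxu
    · exact H.irrefl (h' ▸ hyyp)
    · exact tri y z u (h' ▸ hyyp) hyu hzu
  have hypnv : ¬ H.Adj yp v := by
    intro h
    rcases Nv yp h.symm with h' | h' | h'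
    · exact tri y x v (h' ▸ hyyp) hyv hxv
    · exact H.irrefl (h' ▸ hyyp)
    · exact tri y z v (h' ▸ hyyp) hyv hzv
  have hzpnu : ¬ H.Adj zp u := by
    intro h
    rcases Nu zp h.symm with h' | h' | h'
    · exact tri z x u (h' ▸ hzzp) hzu hxu
    · exact tri z y u (h' ▸ hzzp) hzu hyu
    · exact H.irrefl (h' ▸ hzzp)
  have hzpnv : ¬ H.Adj zp v := by
    intro h
    rcases Nv zp h.symm with h' | h' | h'
    · exact tri z x v (h' ▸ hzzp) hzv hxv
    · exact tri z y v (h' ▸ hzzp) hzv hyv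
    · exact H.irrefl (h' ▸ hzzp)
  -- the two other neighbors of xp, yp, zp
  obtain ⟨xa, xb, hxa, hxb, hxab, hxax, hxbx, hNxp⟩ := exists_two H (hreg xp) hxxp.symm
  obtain ⟨ya, yb, hya, hyb, hyab, hyay, hyby, hNyp⟩ := exists_two H (hreg yp) hyyp.symm
  obtain ⟨za, zb, hza, hzb, hzab, hzaz, hzbz, hNzp⟩ := exists_two H (hreg zp) hzzp.symm
  -- the map into the subtype
  have hxS : x ∈ ({u, v}ᶜ : Set V) := by
    simp only [Set.mem_compl_iff, Set.mem_insert_iff, Set.mem_singleton_iff, not_or]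
    exact ⟨hxu.ne, hxv.ne⟩
  obtain ⟨φ, hφ⟩ : ∃ φ : V → ({u, v}ᶜ : Set V),
      ∀ w (hw : w ∈ ({u, v}ᶜ : Set V)), φ w = ⟨w, hw⟩ :=
    ⟨fun w => if h : w ∈ ({u, v}ᶜ : Set V) then ⟨w, h⟩ else ⟨x, hxS⟩, fun w hw => dif_pos hw⟩
  -- choose three suitable distinct colors
  have hcard4 : ∀ c1 c2 c3 c4 : Fin 7, ({c1, c2, c3, c4} : Finset (Fin 7)).card ≤ 4 := by
    intro c1 c2 c3 c4
    refine (Finset.card_insert_le _ _).trans (Nat.succ_le_succ ?_)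
    refine (Finset.card_insert_le _ _).trans (Nat.succ_le_succ ?_)
    refine (Finset.card_insert_le _ _).trans (Nat.succ_le_succ ?_)
    simp
  have hex : ∀ s : Finset (Fin 7), s.card ≤ 6 → ∃ a, a ∉ s := by
    intro s hs
    by_contra hc
    push_neg at hc
    have : (Finset.univ : Finset (Fin 7)).card ≤ s.card :=
      Finset.card_le_card (fun a _ => hc a)
    simp at this
    omega
  obtain ⟨a, ha⟩ := hex
    {f (Sym2.map φ s(y, yp)), f (Sym2.map φ s(z, zp)),
      f (Sym2.map φ s(xp, xa)), f (Sym2.map φ s(xp, xb))}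
    ((hcard4 _ _ _ _).trans (by norm_num))
  obtain ⟨b, hb⟩ := hex
    (insert a {f (Sym2.map φ s(x, xp)), f (Sym2.map φ s(z, zp)),
      f (Sym2.map φ s(yp, ya)), f (Sym2.map φ s(yp, yb))})
    ((Finset.card_insert_le _ _).trans
      ((Nat.add_le_add_right (hcard4 _ _ _ _) 1).trans (by norm_num)))
  obtain ⟨c, hc⟩ := hex
    (insert a (insert b {f (Sym2.map φ s(x, xp)), f (Sym2.map φ s(y, yp)),
      f (Sym2.map φ s(zp, za)), f (Sym2.map φ s(zp, zb))}))
    ((Finset.card_insert_le _ _).trans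
      (Nat.add_le_add_right ((Finset.card_insert_le _ _).trans
        (Nat.add_le_add_right (hcard4 _ _ _ _) 1)) 1))
  simp only [Finset.mem_insert, Finset.mem_singleton, not_or] at ha hb hc
  obtain ⟨ha1, ha2, ha3, ha4⟩ := ha
  obtain ⟨hba, hb1, hb2, hb3, hb4⟩ := hb
  obtain ⟨hca, hcb, hc1, hc2, hc3, hc4⟩ := hc
  -- the extended coloring
  obtain ⟨f', hf'old, hf'a, hf'b, hf'c⟩ :
      ∃ f' : Sym2 V → Fin 7,
        (∀ e, u ∉ e → v ∉ e → f' e = f (Sym2.map φ e)) ∧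
        (∀ e, (u ∈ e ∨ v ∈ e) → x ∈ e → f' e = a) ∧
        (∀ e, (u ∈ e ∨ v ∈ e) → x ∉ e → y ∈ e → f' e = b) ∧
        (∀ e, (u ∈ e ∨ v ∈ e) → x ∉ e → y ∉ e → f' e = c) := by
    refine ⟨fun e => if u ∈ e ∨ v ∈ e then (if x ∈ e then a else if y ∈ e then b else c)
      else f (Sym2.map φ e), ?_, ?_, ?_, ?_⟩
    · intro e h1 h2
      dsimp only
      exact if_neg (not_or.mpr ⟨h1, h2⟩)
    · intro e h1 h2
      dsimp only
      rw [if_pos h1, if_pos h2]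
    · intro e h1 h2 h3
      dsimp only
      rw [if_pos h1, if_neg h2, if_pos h3]
    · intro e h1 h2 h3
      dsimp only
      rw [if_pos h1, if_neg h2, if_neg h3]
  -- values on the six new edges
  have fvalx : ∀ t, (t = u ∨ t = v) → f' s(x, t) = a := by
    intro t ht
    refine hf'a _ ?_ (by simp)
    rcases ht with rfl | rfl
    · exact Or.inl (by simp)
    · exact Or.inr (by simp)
  have fvaly : ∀ t, (t = u ∨ t = v) → f' s(y, t) = b := by
    intro t ht
    refine hf'b _ ?_ ?_ (by simp)
    · rcases ht with rfl | rfl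
      · exact Or.inl (by simp)
      · exact Or.inr (by simp)
    · rw [Sym2.mem_iff]
      rcases ht with rfl | rfl
      · exact fun h => by rcases h with rfl | rfl; exacts [hxy rfl, hxu.ne rfl]
      · exact fun h => by rcases h with rfl | rfl; exacts [hxy rfl, hxv.ne rfl]
  have fvalz : ∀ t, (t = u ∨ t = v) → f' s(z, t) = c := by
    intro t ht
    refine hf'c _ ?_ ?_ ?_
    · rcases ht with rfl | rfl
      · exact Or.inl (by simp)
      · exact Or.inr (by simp)
    · rw [Sym2.mem_iff]
      rcases ht with rfl | rfl
      · exact fun h => by rcases h with rfl | rfl; exacts [hxz rfl, hxu.ne rfl]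
      · exact fun h => by rcases h with rfl | rfl; exacts [hxz rfl, hxv.ne rfl]
    · rw [Sym2.mem_iff]
      rcases ht with rfl | rfl
      · exact fun h => by rcases h with rfl | rfl; exacts [hyz rfl, hyu.ne rfl]
      · exact fun h => by rcases h with rfl | rfl; exacts [hyz rfl, hyv.ne rfl]
  -- structure of edges through u or v
  have newform : ∀ e ∈ H.edgeSet, (u ∈ e ∨ v ∈ e) →
      ∃ w t, e = s(w, t) ∧ (w = x ∨ w = y ∨ w = z) ∧ (t = u ∨ t = v) := by
    intro e he hm
    rcases hm with hm | hm
    · obtain ⟨w, rfl⟩ := Sym2.mem_iff_exists.mp hm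
      exact ⟨w, u, Sym2.eq_swap, Nu w (H.mem_edgeSet.mp he), Or.inl rfl⟩
    · obtain ⟨w, rfl⟩ := Sym2.mem_iff_exists.mp hm
      exact ⟨w, v, Sym2.eq_swap, Nv w (H.mem_edgeSet.mp he), Or.inr rfl⟩
  -- classification of old edges conflicting with a new edge s(w,t)
  have classify : ∀ w α β w' α' β' : V,
      (∀ s, H.Adj w s → s = u ∨ s = v ∨ s = w') →
      (∀ s, H.Adj α s → s = u ∨ s = v ∨ s = α') →
      (∀ s, H.Adj β s → s = u ∨ s = v ∨ s = β') →
      (∀ s t, (t = u ∨ t = v) → H.Adj t s → s = w ∨ s = α ∨ s = β) →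
      ∀ t, (t = u ∨ t = v) →
      ∀ e2 ∈ H.edgeSet, u ∉ e2 → v ∉ e2 →
      (∀ r ∈ s(w, t), r ∉ e2) →
      (∃ p ∈ s(w, t), ∃ q ∈ e2, H.Adj p q) →
      (∃ r, H.Adj w' r ∧ r ≠ w ∧ e2 = s(w', r)) ∨ e2 = s(α, α') ∨ e2 = s(β, β') := by
    intro w α β w' α' β' hNw hNα hNβ hNt t ht e2 he2 hu2 hv2 hdisj hadj
    obtain ⟨p, hp, q, hq, hpq⟩ := hadj
    have hwq : w ∉ e2 := hdisj w (by simp)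
    have hqw : q ≠ w := fun h => hwq (h ▸ hq)
    rcases Sym2.mem_iff.mp hp with rfl | rfl
    · rcases hNw q hpq with rfl | rfl | rfl
      · exact absurd hq hu2
      · exact absurd hq hv2
      · obtain ⟨r, rfl⟩ := Sym2.mem_iff_exists.mp hq
        refine Or.inl ⟨r, H.mem_edgeSet.mp he2, ?_, rfl⟩
        rintro rfl
        exact hwq (by simp)
    · rcases hNt q p ht hpq with rfl | rfl | rfl
      · exact absurd rfl hqw
      · obtain ⟨r, rfl⟩ := Sym2.mem_iff_exists.mp hq
        rcases hNα r (H.mem_edgeSet.mp he2) with rfl | rfl | rfl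
        · exact absurd (by simp) hu2
        · exact absurd (by simp) hv2
        · exact Or.inr (Or.inl rfl)
      · obtain ⟨r, rfl⟩ := Sym2.mem_iff_exists.mp hq
        rcases hNβ r (H.mem_edgeSet.mp he2) with rfl | rfl | rfl
        · exact absurd (by simp) hu2
        · exact absurd (by simp) hv2
        · exact Or.inr (Or.inr rfl)
  -- mixed case: e1 new, e2 old
  have mixed : ∀ e1 ∈ H.edgeSet, ∀ e2 ∈ H.edgeSet, (u ∈ e1 ∨ v ∈ e1) →
      u ∉ e2 → v ∉ e2 → (∀ r ∈ e1, r ∉ e2) →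
      (∃ p ∈ e1, ∃ q ∈ e2, H.Adj p q) → f' e1 ≠ f' e2 := by
    intro e1 he1 e2 he2 hn1 hu2 hv2 hdisj hadj
    obtain ⟨w, t, rfl, hw, ht⟩ := newform e1 he1 hn1
    rw [hf'old e2 hu2 hv2]
    rcases hw with rfl | rfl | rfl
    · rw [fvalx t ht]
      have hNt : ∀ s t', (t' = u ∨ t' = v) → H.Adj t' s → s = w ∨ s = y ∨ s = z := by
        intro s t' ht' h
        rcases ht' with rfl | rfl
        · exact Nu s h
        · exact Nv s h
      rcases classify w y z xp yp zp hNx hNy hNz hNt t ht e2 he2 hu2 hv2 hdisj hadj with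
        ⟨r, hr, hrw, rfl⟩ | rfl | rfl
      · rcases hNxp r hr with h | rfl | rfl
        · exact absurd h hrw
        · exact ha3
        · exact ha4
      · exact ha1
      · exact ha2
    · rw [fvaly t ht]
      have hNt : ∀ s t', (t' = u ∨ t' = v) → H.Adj t' s → s = w ∨ s = x ∨ s = z := by
        intro s t' ht' h
        rcases ht' with rfl | rfl
        · rcases Nu s h with h' | h' | h'
          exacts [Or.inr (Or.inl h'), Or.inl h', Or.inr (Or.inr h')]
        · rcases Nv s h with h' | h' | h'
          exacts [Or.inr (Or.inl h'), Or.inl h', Or.inr (Or.inr h')]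
      rcases classify w x z yp xp zp hNy hNx hNz hNt t ht e2 he2 hu2 hv2 hdisj hadj with
        ⟨r, hr, hrw, rfl⟩ | rfl | rfl
      · rcases hNyp r hr with h | rfl | rfl
        · exact absurd h hrw
        · exact hb3
        · exact hb4
      · exact hb1
      · exact hb2
    · rw [fvalz t ht]
      have hNt : ∀ s t', (t' = u ∨ t' = v) → H.Adj t' s → s = w ∨ s = x ∨ s = y := by
        intro s t' ht' h
        rcases ht' with rfl | rfl
        · rcases Nu s h with h' | h' | h'
          exacts [Or.inr (Or.inl h'), Or.inr (Or.inr h'), Or.inl h']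
        · rcases Nv s h with h' | h' | h'
          exacts [Or.inr (Or.inl h'), Or.inr (Or.inr h'), Or.inl h']
      rcases classify w x y zp xp yp hNz hNx hNy hNt t ht e2 he2 hu2 hv2 hdisj hadj with
        ⟨r, hr, hrw, rfl⟩ | rfl | rfl
      · rcases hNzp r hr with h | rfl | rfl
        · exact absurd h hrw
        · exact hc3
        · exact hc4
      · exact hc1
      · exact hc2
  -- representation helper
  have hrep : ∀ e : Sym2 V, ∃ p q, e = s(p, q) := by
    intro e
    induction e using Sym2.ind with
    | _ p q => exact ⟨p, q, rfl⟩
  have hmemS : ∀ p q : V, u ∉ s(p, q) → v ∉ s(p, q) →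
      p ∈ ({u, v}ᶜ : Set V) ∧ q ∈ ({u, v}ᶜ : Set V) := by
    intro p q h1 h2
    simp only [Set.mem_compl_iff, Set.mem_insert_iff, Set.mem_singleton_iff, not_or]
    refine ⟨⟨fun h => h1 ?_, fun h => h2 ?_⟩, ⟨fun h => h1 ?_, fun h => h2 ?_⟩⟩ <;>
      rw [Sym2.mem_iff] <;> tauto
  refine ⟨f', ?_⟩
  intro e1 he1 e2 he2 hcon
  obtain ⟨hne, hor⟩ := hcon
  rcases hor with ⟨hdisj, hadj⟩ | ⟨a0, b0, c0, h1, h2, h3, _, _⟩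
  swap
  · exact (tri a0 b0 c0 h1 h3 h2).elim
  by_cases hn1 : u ∈ e1 ∨ v ∈ e1 <;> by_cases hn2 : u ∈ e2 ∨ v ∈ e2
  · -- both new
    obtain ⟨w1, t1, rfl, hw1, ht1⟩ := newform e1 he1 hn1
    obtain ⟨w2, t2, rfl, hw2, ht2⟩ := newform e2 he2 hn2
    have hww : w1 ≠ w2 := by
      rintro rfl
      exact hdisj w1 (by simp) (by simp)
    rcases hw1 with rfl | rfl | rfl <;> rcases hw2 with rfl | rfl | rfl
    · exact absurd rfl hww
    · rw [fvalx t1 ht1, fvaly t2 ht2]; exact Ne.symm hba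
    · rw [fvalx t1 ht1, fvalz t2 ht2]; exact Ne.symm hca
    · rw [fvaly t1 ht1, fvalx t2 ht2]; exact hba
    · exact absurd rfl hww
    · rw [fvaly t1 ht1, fvalz t2 ht2]; exact Ne.symm hcb
    · rw [fvalz t1 ht1, fvalx t2 ht2]; exact hca
    · rw [fvalz t1 ht1, fvaly t2 ht2]; exact hcb
    · exact absurd rfl hww
  · -- e1 new, e2 old
    rw [not_or] at hn2
    exact mixed e1 he1 e2 he2 hn1 hn2.1 hn2.2 hdisj hadj
  · -- e1 old, e2 new
    rw [not_or] at hn1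
    refine (mixed e2 he2 e1 he1 hn2 hn1.1 hn1.2 ?_ ?_).symm
    · exact fun r h2 h1 => hdisj r h1 h2
    · obtain ⟨p, hp, q, hq, hpq⟩ := hadj
      exact ⟨q, hq, p, hp, hpq.symm⟩
  · -- both old
    rw [not_or] at hn1 hn2
    obtain ⟨p1, q1, rfl⟩ := hrep e1
    obtain ⟨p2, q2, rfl⟩ := hrep e2
    obtain ⟨hp1S, hq1S⟩ := hmemS p1 q1 hn1.1 hn1.2
    obtain ⟨hp2S, hq2S⟩ := hmemS p2 q2 hn2.1 hn2.2
    rw [hf'old _ hn1.1 hn1.2, hf'old _ hn2.1 hn2.2, Sym2.map_pair_eq, Sym2.map_pair_eq,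
      hφ p1 hp1S, hφ q1 hq1S, hφ p2 hp2S, hφ q2 hq2S]
    apply hf
    · exact H.mem_edgeSet.mp he1
    · exact H.mem_edgeSet.mp he2
    refine ⟨?_, Or.inl ⟨?_, ?_⟩⟩
    · intro h
      apply hne
      rw [Sym2.eq_iff] at h ⊢
      rcases h with ⟨h1, h2⟩ | ⟨h1, h2⟩
      · exact Or.inl ⟨Subtype.ext_iff.mp h1, Subtype.ext_iff.mp h2⟩
      · exact Or.inr ⟨Subtype.ext_iff.mp h1, Subtype.ext_iff.mp h2⟩
    · rintro w hw hw2
      rw [Sym2.mem_iff] at hw hw2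
      refine hdisj w.val ?_ ?_
      · rw [Sym2.mem_iff]
        rcases hw with h | h
        · exact Or.inl (congrArg Subtype.val h)
        · exact Or.inr (congrArg Subtype.val h)
      · rw [Sym2.mem_iff]
        rcases hw2 with h | h
        · exact Or.inl (congrArg Subtype.val h)
        · exact Or.inr (congrArg Subtype.val h)
    · obtain ⟨p, hp, q, hq, hpq⟩ := hadj
      rw [Sym2.mem_iff] at hp hq
      rcases hp with rfl | rfl <;> rcases hq with rfl | rfl
      · exact ⟨⟨p, hp1S⟩, by simp, ⟨q, hp2S⟩, by simp, hpq⟩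
      · exact ⟨⟨p, hp1S⟩, by simp, ⟨q, hq2S⟩, by simp, hpq⟩
      · exact ⟨⟨p, hq1S⟩, by simp, ⟨q, hp2S⟩, by simp, hpq⟩
      · exact ⟨⟨p, hq1S⟩, by simp, ⟨q, hq2S⟩, by simp, hpq⟩
end
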